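/- Let G be a Lie group acting smoothly on a smooth manifold M, with Lie algebra 𝔤 := T₁G. Then the infinitesimal action a : 𝔤 × M → TM, defined by a(ξ, m) := T ev_m(ξ) ∈ T_mM (a tangent vector based at m), is a smooth map from the product manifold 𝔤 × M to the total space of the tangent bundle TM. -/

import Mathlib

open scoped Manifold
open Bundle

/-- Let `G` be a Lie group acting smoothly on a smooth manifold `M`, with Lie
algebra `𝔤 = T₁G`.  Then the infinitesimal action `a : 𝔤 × M → TM`, sending `(ξ, m)` to the
tangent vector `T ev_m (ξ) ∈ T_mM` based at `m`, is a smooth map from the product manifold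
`𝔤 × M` to the total space of the tangent bundle `TM`. -/
theorem infinitesimal_action_smooth
    {EG : Type*} [NormedAddCommGroup EG] [NormedSpace ℝ EG]
    {HG : Type*} [TopologicalSpace HG] {IG : ModelWithCorners ℝ EG HG}
    {G : Type*} [TopologicalSpace G] [ChartedSpace HG G] [Group G]
    [IsManifold IG (⊤ : ℕ∞) G] [LieGroup IG (⊤ : ℕ∞) G]
    {EM : Type*} [NormedAddCommGroup EM] [NormedSpace ℝ EM]
    {HM : Type*} [TopologicalSpace HM] {IM : ModelWithCorners ℝ EM HM}
    {M : Type*} [TopologicalSpace M] [ChartedSpace HM M] [IsManifold IM (⊤ : ℕ∞) M]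
    [MulAction G M]
    (hact : ContMDiff (IG.prod IM) IM (⊤ : ℕ∞) fun p : G × M => p.1 • p.2) :
    ContMDiff ((𝓘(ℝ, EG)).prod IM) IM.tangent (⊤ : ℕ∞)
      (fun p : EG × M =>
        (⟨p.2, mfderiv IG IM (fun g : G => g • p.2) (1 : G) p.1⟩ : TangentBundle IM M)) := by
  rintro ⟨ξ₀, m₀⟩
  rw [Bundle.contMDiffAt_totalSpace]
  refine ⟨contMDiffAt_snd, ?_⟩
  have hf : ContMDiffAt (IM.prod IG) IM (⊤ : ℕ∞)
      (Function.uncurry fun (m : M) (g : G) => g • m) (m₀, (1 : G)) := by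
    have : (Function.uncurry fun (m : M) (g : G) => g • m)
        = (fun p : G × M => p.1 • p.2) ∘ Prod.swap := rfl
    rw [this]
    exact ContMDiffAt.comp (m₀, (1 : G)) (hact (1, m₀)) (contMDiffAt_snd.prodMk contMDiffAt_fst)
  have key : ContMDiffAt ((𝓘(ℝ, EG)).prod IM) 𝓘(ℝ, EM) (⊤ : ℕ∞)
      (fun x : EG × M => inTangentCoordinates IG IM (fun _ : M => (1 : G))
        (fun m : M => (1 : G) • m)
        (fun m : M => mfderiv IG IM (fun g : G => g • m) (1 : G)) m₀ x.2 x.1) (ξ₀, m₀) :=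
    ContMDiffAt.mfderiv_apply (I := IG) (I' := IM)
      (J := IM) (J' := (𝓘(ℝ, EG)).prod IM) (m := (⊤:ℕ∞)) (n := (⊤:ℕ∞)) (x₀ := (ξ₀, m₀))
      (fun (m : M) (g : G) => g • m) (fun _ : M => (1 : G)) Prod.snd Prod.fst
      hf contMDiffAt_const contMDiffAt_snd contMDiffAt_fst (by exact_mod_cast (le_top : (⊤ : ℕ∞) + 1 ≤ ⊤))
  refine key.congr_of_eventuallyEq ?_
  have hmem : ∀ᶠ p : EG × M in nhds (ξ₀, m₀), p.2 ∈ (chartAt HM m₀).source := by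
    have : (chartAt HM m₀).source ∈ nhds m₀ :=
      (chartAt HM m₀).open_source.mem_nhds (mem_chart_source _ _)
    exact continuous_snd.continuousAt.preimage_mem_nhds this
  filter_upwards [hmem] with p hp
  have h1 : ((1 : G) • p.2 : M) = p.2 := one_smul _ _
  have hy : ((1 : G) • p.2 : M) ∈ (chartAt HM ((fun _ : M => (1:G)) m₀ • m₀)).source := by
    rw [h1, one_smul]; exact hp
  rw [inTangentCoordinates_eq (I := IG) (I' := IM) (fun _ : M => (1 : G))
    (fun m : M => (1 : G) • m)
    (fun m : M => mfderiv IG IM (fun g : G => g • m) (1 : G))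
    (mem_chart_source _ _) hy]
  simp only [ContinuousLinearMap.comp_apply, one_smul]
  have hc : (mfderiv IG IM (fun g : G => g • p.2) (1 : G)).comp
      ((tangentBundleCore IG G).coordChange (achart HG (1 : G)) (achart HG (1 : G)) (1 : G))
      = mfderiv IG IM (fun g : G => g • p.2) (1 : G) := by
    ext v
    exact congrArg (mfderiv IG IM (fun g : G => g • p.2) (1 : G))
      ((tangentBundleCore IG G).coordChange_self (achart HG (1 : G)) (1 : G) (mem_chart_source _ _) v)
  refine Eq.trans ?_ (congrArg (fun L : EG →L[ℝ] EM =>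
    (tangentBundleCore IM M).coordChange (achart HM p.2) (achart HM m₀) p.2 (L p.1)) hc).symm
  rfl
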